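/- For every natural number b ≥ 1, the polynomial f_b(t) = 2·∑_{i=0}^{2b} t^i + t^b is irreducible over ℚ. -/

import Mathlib

open Polynomial


noncomputable def Fb (b : ℕ) : ℤ[X] := 2 * ∑ i ∈ Finset.range (2 * b + 1), X ^ i + X ^ b

lemma Fb_coeff (b n : ℕ) :
    (Fb b).coeff n = (if n ≤ 2 * b then 2 else 0) + (if n = b then 1 else 0) := by
  rw [Fb]
  rw [coeff_add, coeff_X_pow]
  congr 1
  rw [show (2 : ℤ[X]) = C 2 by norm_num, coeff_C_mul, finset_sum_coeff]
  simp only [coeff_X_pow]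
  rw [Finset.sum_ite_eq (Finset.range (2*b+1)) n (fun _ => (1:ℤ))]
  simp only [Finset.mem_range]
  split <;> split <;> omega

lemma Fb_natDegree (b : ℕ) : (Fb b).natDegree = 2 * b := by
  apply le_antisymm
  · apply natDegree_le_iff_coeff_eq_zero.mpr
    intro n hn
    rw [Fb_coeff]
    have h1 : ¬ (n ≤ 2*b) := by omega
    have h2 : ¬ (n = b) := by omega
    simp [h1, h2]
  · apply le_natDegree_of_ne_zero
    rw [Fb_coeff]
    split <;> split <;> omega

lemma Fb_primitive (b : ℕ) (hb : 1 ≤ b) : (Fb b).IsPrimitive := by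
  intro r hr
  rw [C_dvd_iff_dvd_coeff] at hr
  have h2 : r ∣ 2 := by have := hr 0; rwa [Fb_coeff, if_pos (by omega), if_neg (by omega), add_zero] at this
  have h3 : r ∣ 3 := by
    have := hr b; rwa [Fb_coeff, if_pos (by omega), if_pos rfl] at this
  have h1 : r ∣ 1 := by simpa using dvd_sub h3 h2
  exact isUnit_of_dvd_one h1

lemma Fb_map_rat (b : ℕ) :
    (Fb b).map (Int.castRingHom ℚ) =
      2 * ∑ i ∈ Finset.range (2 * b + 1), (X : ℚ[X]) ^ i + X ^ b := by
  simp [Fb, Polynomial.map_add, Polynomial.map_mul, Polynomial.map_sum, Polynomial.map_pow]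

lemma Fb_map_zmod2 (b : ℕ) :
    (Fb b).map (Int.castRingHom (ZMod 2)) = X ^ b := by
  simp [Fb, Polynomial.map_add, Polynomial.map_mul, Polynomial.map_sum, Polynomial.map_pow]
  left
  rw [(map_ofNat (C : ZMod 2 →+* (ZMod 2)[X]) 2).symm, show (2 : ZMod 2) = 0 by decide]
  simp

lemma dvd_Xpow_cases (b : ℕ) {g : (ZMod 2)[X]} (hd : g ∣ (X : (ZMod 2)[X]) ^ b) :
    g = 1 ∨ g.coeff 0 = 0 := by
  obtain ⟨i, hib, hassoc⟩ := (dvd_prime_pow Polynomial.prime_X b).mp hd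
  obtain ⟨u, hu⟩ := hassoc
  obtain ⟨r, hr, hCr⟩ := Polynomial.isUnit_iff.mp u.isUnit
  have hr1 : r = 1 := by
    have hne := hr.ne_zero
    have : ∀ c : ZMod 2, c ≠ 0 → c = 1 := by decide
    exact this r hne
  have hu1 : (u : (ZMod 2)[X]) = 1 := by rw [← hCr, hr1, map_one]
  rw [hu1, mul_one] at hu
  subst hu
  rcases Nat.eq_zero_or_pos i with h0 | h0
  · left; rw [h0, pow_zero]
  · right; rw [coeff_X_pow]; simp only [if_neg (by omega : ¬ (0 = i))]
open Polynomial

noncomputable def Complex.abs : AbsoluteValue ℂ ℝ :=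
  IsAbsoluteValue.toAbsoluteValue (norm : ℂ → ℝ)

lemma Complex.sq_abs (z : ℂ) : Complex.abs z ^ 2 = Complex.normSq z := Complex.sq_norm z

lemma Complex.abs_intCast (n : ℤ) : Complex.abs (n : ℂ) = |(n : ℝ)| := by
  simp [Complex.abs]

@[simp] lemma Complex.abs_two : Complex.abs (2 : ℂ) = 2 := by
  simp [Complex.abs]

lemma root_abs_one (b : ℕ) (hb : 1 ≤ b) (z : ℂ)
    (hz : 2 * ∑ i ∈ Finset.range (2 * b + 1), z ^ i + z ^ b = 0) :
    Complex.abs z = 1 := by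
  have hgs := geom_sum_mul z (2 * b + 1)
  have h2 : 2 * (z ^ (2*b+1) - 1) + z ^ (b+1) - z ^ b = 0 := by
    linear_combination (z - 1) * hz - 2 * hgs
  have h2b : z ^ (2 * b + 1) = z ^ b * z ^ b * z := by
    rw [← pow_add, ← pow_succ]; ring_nf
  have hb1 : z ^ (b + 1) = z ^ b * z := by rw [pow_succ]
  rw [h2b, hb1] at h2
  set w := z ^ b with hw
  have key : z * w * (2 * w + 1) = w + 2 := by linear_combination h2
  have habs : Complex.abs z * Complex.abs w * Complex.abs (2 * w + 1)
      = Complex.abs (w + 2) := by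
    rw [← map_mul, ← map_mul, key]
  have hns : Complex.normSq (w + 2) - Complex.normSq (2 * w + 1)
      = 3 - 3 * Complex.normSq w := by
    simp [Complex.normSq_apply]; ring
  have habsw : Complex.abs w = Complex.abs z ^ b := by rw [hw, map_pow]
  rcases lt_trichotomy (Complex.abs z) 1 with h | h | h
  · exfalso
    have hwlt : Complex.abs w < 1 := by
      rw [habsw]; exact pow_lt_one₀ (Complex.abs.nonneg z) h (by omega)
    have hnslt : Complex.normSq w < 1 := by
      rw [← Complex.sq_abs]; nlinarith [Complex.abs.nonneg w]
    have hgt : Complex.abs (2 * w + 1) < Complex.abs (w + 2) := by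
      have h1 : Complex.abs (2*w+1) ^ 2 < Complex.abs (w+2) ^ 2 := by
        rw [Complex.sq_abs, Complex.sq_abs]; nlinarith
      nlinarith [Complex.abs.nonneg (2*w+1), Complex.abs.nonneg (w+2)]
    have h210 : Complex.abs (2 * w + 1) ≠ 0 := by
      intro h0
      rw [h0, mul_zero] at habs
      have : w + 2 = 0 := by
        have := (map_eq_zero Complex.abs).mp habs.symm
        exact this
      have : w = -2 := by linear_combination this
      rw [this] at hwlt; simp at hwlt
    have hzw : Complex.abs z * Complex.abs w < 1 := by
      nlinarith [Complex.abs.nonneg z, Complex.abs.nonneg w]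
    nlinarith [Complex.abs.nonneg (2*w+1)]
  · exact h
  · exfalso
    have hwgt : 1 < Complex.abs w := by
      rw [habsw]; exact one_lt_pow₀ h (by omega)
    have hnsgt : 1 < Complex.normSq w := by
      rw [← Complex.sq_abs]; nlinarith
    have hlt : Complex.abs (w + 2) < Complex.abs (2 * w + 1) := by
      have h1 : Complex.abs (w+2) ^ 2 < Complex.abs (2*w+1) ^ 2 := by
        rw [Complex.sq_abs, Complex.sq_abs]; nlinarith
      nlinarith [Complex.abs.nonneg (2*w+1), Complex.abs.nonneg (w+2)]
    have h210 : Complex.abs (2 * w + 1) ≠ 0 := by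
      intro h0
      have : (2 : ℂ) * w + 1 = 0 := (map_eq_zero Complex.abs).mp h0
      have hw2 : w = -(1/2) := by linear_combination this / 2
      rw [hw2] at hwgt; norm_num at hwgt
    have hzw : 1 < Complex.abs z * Complex.abs w := by nlinarith
    have hpos : 0 < Complex.abs (2 * w + 1) :=
      lt_of_le_of_ne (Complex.abs.nonneg _) (Ne.symm h210)
    nlinarith

lemma FbC_eval (b : ℕ) (z : ℂ) :
    ((Fb b).map (Int.castRingHom ℂ)).eval z
      = 2 * ∑ i ∈ Finset.range (2 * b + 1), z ^ i + z ^ b := by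
  simp [Fb, Polynomial.map_add, Polynomial.map_mul, Polynomial.map_sum, Polynomial.map_pow,
    eval_finset_sum]

lemma factor_false (b : ℕ) (hb : 1 ≤ b) (g h : ℤ[X]) (hgh : Fb b = g * h)
    (hg1 : g.map (Int.castRingHom (ZMod 2)) = 1) (hdeg : 1 ≤ g.natDegree) : False := by
  have hcoeffmap : ∀ n, ((g.coeff n : ZMod 2)) = (1 : (ZMod 2)[X]).coeff n := by
    intro n
    rw [← hg1, coeff_map]; rfl
  have hc0 : (g.coeff 0 : ZMod 2) = 1 := by rw [hcoeffmap 0]; simp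
  have hlc : (g.leadingCoeff : ZMod 2) = 0 := by
    rw [leadingCoeff, hcoeffmap]
    rw [coeff_one, if_neg (by omega)]
  have hg0 : g ≠ 0 := by
    intro h0; rw [h0] at hg1; simp at hg1
  set gC := g.map (Int.castRingHom ℂ) with hgC
  have hgC0 : gC ≠ 0 := by
    rw [hgC, Polynomial.map_ne_zero_iff (Int.cast_injective)]
    exact hg0
  -- all roots of gC have absolute value 1
  have hroots : ∀ a ∈ gC.roots, Complex.abs a = 1 := by
    intro a ha
    have hroot : gC.eval a = 0 := (mem_roots hgC0).mp ha
    have hFroot : ((Fb b).map (Int.castRingHom ℂ)).eval a = 0 := by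
      rw [hgh, Polynomial.map_mul, eval_mul, hroot, zero_mul]
    rw [FbC_eval] at hFroot
    exact root_abs_one b hb a hFroot
  have hsp : gC.Splits := IsAlgClosed.splits gC
  have heq := hsp.eq_prod_roots
  have heval := congrArg (eval 0) heq
  rw [eval_mul, eval_C, eval_multiset_prod, Multiset.map_map] at heval
  have habs := congrArg Complex.abs heval
  rw [map_mul, map_multiset_prod, Multiset.map_map] at habs
  have hprod1 : ((gC.roots.map fun a => Complex.abs (eval 0 ((X - C a) : ℂ[X])))).prod = 1 := by
    apply Multiset.prod_eq_one
    intro x hx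
    obtain ⟨a, ha, hax⟩ := Multiset.mem_map.mp hx
    rw [← hax]
    simp [hroots a ha]
  simp only [Function.comp_apply] at habs
  rw [hprod1, mul_one] at habs
  -- translate to integer statement
  have h1 : Complex.abs (eval 0 gC) = Complex.abs (gC.leadingCoeff) := habs
  have hev0 : eval 0 gC = ((g.coeff 0 : ℤ) : ℂ) := by
    rw [← coeff_zero_eq_eval_zero, hgC, coeff_map]; rfl
  have hlcC : gC.leadingCoeff = ((g.leadingCoeff : ℤ) : ℂ) := by
    rw [hgC, leadingCoeff_map_of_injective (Int.cast_injective)]; rfl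
  rw [hev0, hlcC] at h1
  rw [Complex.abs_intCast, Complex.abs_intCast] at h1
  have h2 : |g.coeff 0| = |g.leadingCoeff| := by
    exact_mod_cast h1
  rcases abs_eq_abs.mp h2 with h3 | h3
  · rw [h3, hlc] at hc0; exact one_ne_zero hc0.symm
  · rw [h3] at hc0
    rw [Int.cast_neg, hlc, neg_zero] at hc0
    exact one_ne_zero hc0.symm

lemma Fb_irred (b : ℕ) (hb : 1 ≤ b) : Irreducible (Fb b) := by
  constructor
  · intro hu
    have := natDegree_eq_zero_of_isUnit hu
    rw [Fb_natDegree] at this; omega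
  · intro g h hgh
    by_contra hcon
    push_neg at hcon
    obtain ⟨hgu, hhu⟩ := hcon
    have hdegg : 1 ≤ g.natDegree := by
      rcases Nat.eq_zero_or_pos g.natDegree with h0 | h0
      · exfalso
        have hgC := eq_C_of_natDegree_eq_zero h0
        have hdvd : C (g.coeff 0) ∣ Fb b := ⟨h, by rw [hgh, hgC, coeff_C_zero]⟩
        have := Fb_primitive b hb _ hdvd
        exact hgu (hgC ▸ isUnit_C.mpr this)
      · exact h0
    have hdegh : 1 ≤ h.natDegree := by
      rcases Nat.eq_zero_or_pos h.natDegree with h0 | h0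
      · exfalso
        have hhC := eq_C_of_natDegree_eq_zero h0
        have hdvd : C (h.coeff 0) ∣ Fb b := ⟨g, by rw [hgh, hhC, coeff_C_zero]; ring⟩
        have := Fb_primitive b hb _ hdvd
        exact hhu (hhC ▸ isUnit_C.mpr this)
      · exact h0
    have hmap : (g.map (Int.castRingHom (ZMod 2))) * (h.map (Int.castRingHom (ZMod 2)))
        = (X : (ZMod 2)[X]) ^ b := by
      rw [← Polynomial.map_mul, ← hgh, Fb_map_zmod2]
    have hgdvd : g.map (Int.castRingHom (ZMod 2)) ∣ (X : (ZMod 2)[X]) ^ b := ⟨_, hmap.symm⟩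
    have hhdvd : h.map (Int.castRingHom (ZMod 2)) ∣ (X : (ZMod 2)[X]) ^ b :=
      ⟨_, by rw [← hmap]; ring⟩
    rcases dvd_Xpow_cases b hgdvd with hg1 | hgc0
    · exact factor_false b hb g h hgh hg1 hdegg
    rcases dvd_Xpow_cases b hhdvd with hh1 | hhc0
    · exact factor_false b hb h g (by rw [hgh]; ring) hh1 hdegh
    -- both constant terms even: contradiction with coeff 0 = 2
    have hgc : (2 : ℤ) ∣ g.coeff 0 := by
      have := (ZMod.intCast_zmod_eq_zero_iff_dvd (g.coeff 0) 2).mp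
        (by simpa [coeff_map] using hgc0)
      exact_mod_cast this
    have hhc : (2 : ℤ) ∣ h.coeff 0 := by
      have := (ZMod.intCast_zmod_eq_zero_iff_dvd (h.coeff 0) 2).mp
        (by simpa [coeff_map] using hhc0)
      exact_mod_cast this
    have h2 : (Fb b).coeff 0 = 2 := by
      rw [Fb_coeff, if_pos (by omega), if_neg (by omega)]; ring
    have h4 : (4 : ℤ) ∣ 2 := by
      rw [← h2, hgh, mul_coeff_zero]
      exact mul_dvd_mul hgc hhc
    norm_num at h4

/-- For every `b ≥ 1`, the polynomial `f_b(t) = 2·∑_{i=0}^{2b} t^i + t^b`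
is irreducible over `ℚ`. -/
theorem stmt_1 (b : ℕ) (hb : 1 ≤ b) :
    Irreducible (2 * ∑ i ∈ Finset.range (2 * b + 1), (X : ℚ[X]) ^ i + X ^ b) := by
  rw [← Fb_map_rat b]
  exact (Polynomial.IsPrimitive.Int.irreducible_iff_irreducible_map_cast
    (Fb_primitive b hb)).mp (Fb_irred b hb)
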